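/- arXiv:1611.04462 — 2 statements merged into one kernel-verified Lean document; each statement's English description precedes it below -/
import Mathlib

section
/- Let q ≥ 2 and let r : ℤ → ℂ be the ramp signal r(n) = n. Then (R_q r)(n) = −Σ_{l=0}^{q-1} l·c_q(l), a value independent of n; moreover this value equals Σ_{1 ≤ k ≤ q, gcd(k,q)=1} q/(1 − exp(2πik/q)). -/
open Finset

noncomputable def ramanujanSum (q : ℕ) (n : ℤ) : ℂ :=
  ∑ k ∈ (Finset.Icc 1 q).filter (fun k => Nat.gcd k q = 1),
    Complex.exp (2 * Real.pi * Complex.I * (k : ℂ) * (n : ℂ) / (q : ℂ))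

lemma aux_weighted (z : ℂ) (n : ℕ) :
    (z - 1) * ∑ l ∈ Finset.range n, (l : ℂ) * z ^ l
      = ((n : ℂ) - 1) * z ^ n - (∑ l ∈ Finset.range n, z ^ l) + 1 := by
  induction n with
  | zero => simp
  | succ m ih =>
    rw [Finset.sum_range_succ, Finset.sum_range_succ, mul_add, ih]
    push_cast
    ring

theorem stmt6 (q : ℕ) (hq : 2 ≤ q) (r : ℤ → ℂ) (hr : ∀ n : ℤ, r n = (n : ℂ))
    (n : ℤ) :
    (∑ l ∈ Finset.range q, ramanujanSum q l * r (n - l))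
      = -(∑ l ∈ Finset.range q, (l : ℂ) * ramanujanSum q l) ∧
    -(∑ l ∈ Finset.range q, (l : ℂ) * ramanujanSum q l)
      = ∑ k ∈ (Finset.Icc 1 q).filter (fun k => Nat.gcd k q = 1),
          (q : ℂ) / (1 - Complex.exp (2 * Real.pi * Complex.I * (k : ℂ) / (q : ℂ))) := by
  set S := (Finset.Icc 1 q).filter (fun k => Nat.gcd k q = 1) with hS
  set z : ℕ → ℂ := fun k => Complex.exp (2 * Real.pi * Complex.I * (k : ℂ) / (q : ℂ)) with hz
  have hq0 : (q : ℂ) ≠ 0 := by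
    exact_mod_cast Nat.cast_ne_zero.mpr (by omega)
  -- membership facts
  have hmem : ∀ k ∈ S, 1 ≤ k ∧ k < q := by
    intro k hk
    simp only [hS, Finset.mem_filter, Finset.mem_Icc] at hk
    refine ⟨hk.1.1, ?_⟩
    rcases lt_or_eq_of_le hk.1.2 with h | h
    · exact h
    · exfalso; have := hk.2; rw [h, Nat.gcd_self] at this; omega
  have hz_ne : ∀ k ∈ S, z k ≠ 1 := by
    intro k hk h1
    obtain ⟨hk1, hk2⟩ := hmem k hk
    rw [hz] at h1
    rw [Complex.exp_eq_one_iff] at h1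
    obtain ⟨m, hm⟩ := h1
    have hpi : (2 * Real.pi * Complex.I : ℂ) ≠ 0 := by
      simp [Real.pi_ne_zero, Complex.I_ne_zero]
    have hkm : (k : ℂ) = (m : ℂ) * (q : ℂ) := by
      field_simp at hm
      have : 2 * (Real.pi : ℂ) * Complex.I * (k : ℂ)
          = 2 * (Real.pi : ℂ) * Complex.I * ((m : ℂ) * (q : ℂ)) := by
        rw [hm]; ring
      exact mul_left_cancel₀ hpi this
    have hkm' : (k : ℤ) = m * (q : ℤ) := by exact_mod_cast hkm
    have hdvd : (q : ℤ) ∣ (k : ℤ) := ⟨m, by linarith [hkm']⟩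
    have := Int.le_of_dvd (by exact_mod_cast hk1) hdvd
    omega
  have hz_pow : ∀ k ∈ S, z k ^ q = 1 := by
    intro k hk
    rw [hz, ← Complex.exp_nat_mul]
    have : (q : ℂ) * (2 * Real.pi * Complex.I * (k : ℂ) / (q : ℂ))
        = (k : ℂ) * (2 * Real.pi * Complex.I) := by field_simp
    rw [this, Complex.exp_nat_mul, Complex.exp_two_pi_mul_I, one_pow]
  have hram : ∀ l : ℕ, ramanujanSum q (l : ℤ) = ∑ k ∈ S, z k ^ l := by
    intro l
    unfold ramanujanSum
    apply Finset.sum_congr rfl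
    intro k _
    rw [hz, ← Complex.exp_nat_mul]
    congr 1
    push_cast
    ring
  have hgeom : ∀ k ∈ S, ∑ l ∈ Finset.range q, z k ^ l = 0 := by
    intro k hk
    rw [geom_sum_eq (hz_ne k hk), hz_pow k hk]
    simp
  have hzero : ∑ l ∈ Finset.range q, ramanujanSum q (l : ℤ) = 0 := by
    calc ∑ l ∈ Finset.range q, ramanujanSum q (l : ℤ)
        = ∑ l ∈ Finset.range q, ∑ k ∈ S, z k ^ l := by
          exact Finset.sum_congr rfl fun l _ => hram l
      _ = ∑ k ∈ S, ∑ l ∈ Finset.range q, z k ^ l := Finset.sum_comm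
      _ = 0 := Finset.sum_eq_zero hgeom
  constructor
  · calc ∑ l ∈ Finset.range q, ramanujanSum q l * r (n - l)
        = ∑ l ∈ Finset.range q, (ramanujanSum q l * (n : ℂ) - (l : ℂ) * ramanujanSum q l) := by
          apply Finset.sum_congr rfl
          intro l _
          rw [hr]
          push_cast
          ring
      _ = (∑ l ∈ Finset.range q, ramanujanSum q l) * (n : ℂ)
            - ∑ l ∈ Finset.range q, (l : ℂ) * ramanujanSum q l := by
          rw [Finset.sum_sub_distrib, Finset.sum_mul]
      _ = -(∑ l ∈ Finset.range q, (l : ℂ) * ramanujanSum q l) := by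
          rw [hzero]; ring
  · have hW : ∀ k ∈ S, ∑ l ∈ Finset.range q, (l : ℂ) * z k ^ l = (q : ℂ) / (z k - 1) := by
      intro k hk
      have hne : z k - 1 ≠ 0 := sub_ne_zero.mpr (hz_ne k hk)
      rw [eq_div_iff hne, mul_comm, aux_weighted, hz_pow k hk, hgeom k hk]
      ring
    calc -(∑ l ∈ Finset.range q, (l : ℂ) * ramanujanSum q l)
        = -(∑ l ∈ Finset.range q, ∑ k ∈ S, (l : ℂ) * z k ^ l) := by
          congr 1
          apply Finset.sum_congr rfl
          intro l _
          rw [hram l, Finset.mul_sum]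
      _ = -(∑ k ∈ S, ∑ l ∈ Finset.range q, (l : ℂ) * z k ^ l) := by rw [Finset.sum_comm]
      _ = ∑ k ∈ S, -((q : ℂ) / (z k - 1)) := by
          rw [← Finset.sum_neg_distrib]
          apply Finset.sum_congr rfl
          intro k hk
          rw [hW k hk]
      _ = ∑ k ∈ S, (q : ℂ) / (1 - z k) := by
          apply Finset.sum_congr rfl
          intro k _
          rw [show (1 : ℂ) - z k = -(z k - 1) by ring, div_neg]
      _ = _ := rfl
end

section
/- Let q ≥ 3 be odd and c̃_q(n) = c_q(n − (q−1)/2) for 0 ≤ n ≤ q−1. Then the quadratic sum Σ_{l=0}^{q-1} (n − l)² · c̃_q(l) is independent of n (a constant in n). -/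
open Finset

lemma twoPiI_ne_zero : (2 * (Real.pi : ℂ) * Complex.I) ≠ 0 := by
  simp [Real.pi_ne_zero, Complex.I_ne_zero, Complex.ofReal_ne_zero]

lemma mem_filter_facts {q k : ℕ} (hq : 3 ≤ q)
    (hk : k ∈ (Finset.Icc 1 q).filter (fun k => Nat.gcd k q = 1)) :
    1 ≤ k ∧ k < q ∧ Nat.gcd k q = 1 := by
  simp only [Finset.mem_filter, Finset.mem_Icc] at hk
  refine ⟨hk.1.1, ?_, hk.2⟩
  rcases lt_or_eq_of_le hk.1.2 with h | h
  · exact h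
  · subst h
    rw [Nat.gcd_self] at hk
    omega

lemma geom_zero {q k : ℕ} (hk1 : 1 ≤ k) (hkq : k < q) :
    ∑ l ∈ Finset.range q,
      Complex.exp (2 * Real.pi * Complex.I * (k : ℂ) / (q : ℂ)) ^ l = 0 := by
  have hq0 : (q : ℂ) ≠ 0 := Nat.cast_ne_zero.mpr (by omega)
  set z : ℂ := Complex.exp (2 * Real.pi * Complex.I * (k : ℂ) / (q : ℂ)) with hz
  have hz1 : z ≠ 1 := by
    intro h
    rw [hz, Complex.exp_eq_one_iff] at h
    obtain ⟨mm, hm⟩ := h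
    rw [div_eq_iff hq0] at hm
    have hk' : (k : ℂ) = (mm : ℂ) * (q : ℂ) := by
      apply mul_left_cancel₀ twoPiI_ne_zero
      linear_combination hm
    have hk2 : (k : ℤ) = mm * q := by exact_mod_cast hk'
    have hdvd : (q : ℤ) ∣ (k : ℤ) := ⟨mm, by linarith⟩
    have := Int.le_of_dvd (by exact_mod_cast hk1) hdvd
    omega
  have hzq : z ^ q = 1 := by
    rw [hz, ← Complex.exp_nat_mul]
    have harg : (q : ℂ) * (2 * Real.pi * Complex.I * (k : ℂ) / (q : ℂ))
        = (k : ℕ) * (2 * Real.pi * Complex.I) := by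
      field_simp
    rw [harg, Complex.exp_nat_mul_two_pi_mul_I]
  rw [geom_sum_eq hz1, hzq]
  simp

lemma ramanujanSum_neg {q : ℕ} (hq : 3 ≤ q) (n : ℤ) :
    ramanujanSum q (-n) = ramanujanSum q n := by
  have hq0 : (q : ℂ) ≠ 0 := Nat.cast_ne_zero.mpr (by omega)
  unfold ramanujanSum
  refine Finset.sum_nbij' (fun k => q - k) (fun k => q - k) ?_ ?_ ?_ ?_ ?_
  · intro k hk
    obtain ⟨h1, h2, h3⟩ := mem_filter_facts hq hk
    simp only [Finset.mem_filter, Finset.mem_Icc]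
    refine ⟨⟨by omega, by omega⟩, ?_⟩
    exact (Nat.coprime_self_sub_left (by omega)).mpr h3
  · intro k hk
    obtain ⟨h1, h2, h3⟩ := mem_filter_facts hq hk
    simp only [Finset.mem_filter, Finset.mem_Icc]
    refine ⟨⟨by omega, by omega⟩, ?_⟩
    exact (Nat.coprime_self_sub_left (by omega)).mpr h3
  · intro k hk
    obtain ⟨h1, h2, h3⟩ := mem_filter_facts hq hk
    show q - (q - k) = k
    omega
  · intro k hk
    obtain ⟨h1, h2, h3⟩ := mem_filter_facts hq hk
    show q - (q - k) = k
    omega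
  · intro k hk
    obtain ⟨h1, h2, h3⟩ := mem_filter_facts hq hk
    have hcast : ((q - k : ℕ) : ℂ) = (q : ℂ) - (k : ℂ) := by
      push_cast [Nat.cast_sub (le_of_lt h2)]
      ring
    rw [hcast]
    have harg : 2 * (Real.pi : ℂ) * Complex.I * ((q : ℂ) - (k : ℂ)) * ((n : ℤ) : ℂ) / (q : ℂ)
        = ((n : ℤ) : ℂ) * (2 * Real.pi * Complex.I)
          + 2 * Real.pi * Complex.I * (k : ℂ) * ((-n : ℤ) : ℂ) / (q : ℂ) := by
      field_simp
      push_cast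
      ring
    rw [harg, Complex.exp_add, Complex.exp_int_mul_two_pi_mul_I, one_mul]

lemma S0_zero {q : ℕ} (hq : 3 ≤ q) (h : ℤ) :
    ∑ l ∈ Finset.range q, ramanujanSum q ((l : ℤ) - h) = 0 := by
  have hq0 : (q : ℂ) ≠ 0 := Nat.cast_ne_zero.mpr (by omega)
  unfold ramanujanSum
  rw [Finset.sum_comm]
  refine Finset.sum_eq_zero fun k hk => ?_
  obtain ⟨hk1, hkq, hg⟩ := mem_filter_facts hq hk
  have step : ∀ l ∈ Finset.range q,
      Complex.exp (2 * Real.pi * Complex.I * (k : ℂ) * (((l : ℤ) - h : ℤ) : ℂ) / (q : ℂ))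
      = Complex.exp (2 * Real.pi * Complex.I * (k : ℂ) * ((-h : ℤ) : ℂ) / (q : ℂ))
        * Complex.exp (2 * Real.pi * Complex.I * (k : ℂ) / (q : ℂ)) ^ l := by
    intro l _
    rw [← Complex.exp_nat_mul, ← Complex.exp_add]
    congr 1
    push_cast
    field_simp
    ring
  rw [Finset.sum_congr rfl step, ← Finset.mul_sum, geom_zero hk1 hkq, mul_zero]

lemma S1_zero {q : ℕ} (hq : 3 ≤ q) (hodd : Odd q) :
    ∑ l ∈ Finset.range q, (l : ℂ) * ramanujanSum q ((l : ℤ) - ((q : ℤ) - 1) / 2) = 0 := by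
  set h : ℤ := ((q : ℤ) - 1) / 2 with hh
  obtain ⟨r, hr⟩ := hodd
  have h2 : 2 * h = (q : ℤ) - 1 := by omega
  have hrefl : ∑ l ∈ Finset.range q, (l : ℂ) * ramanujanSum q ((l : ℤ) - h)
      = ∑ l ∈ Finset.range q, ((q : ℂ) - 1 - (l : ℂ)) * ramanujanSum q ((l : ℤ) - h) := by
    rw [← Finset.sum_range_reflect (fun l => (l : ℂ) * ramanujanSum q ((l : ℤ) - h)) q]
    refine Finset.sum_congr rfl fun l hl => ?_
    have hl' : l < q := Finset.mem_range.mp hl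
    have hcast : ((q - 1 - l : ℕ) : ℂ) = (q : ℂ) - 1 - (l : ℂ) := by
      push_cast [Nat.cast_sub (by omega : l ≤ q - 1), Nat.cast_sub (by omega : 1 ≤ q)]
      ring
    have hargZ : ((q - 1 - l : ℕ) : ℤ) - h = -((l : ℤ) - h) := by
      push_cast [Nat.cast_sub (by omega : l ≤ q - 1), Nat.cast_sub (by omega : 1 ≤ q)]
      omega
    rw [hcast, hargZ, ramanujanSum_neg hq]
  have hsum : (∑ l ∈ Finset.range q, (l : ℂ) * ramanujanSum q ((l : ℤ) - h))
      + (∑ l ∈ Finset.range q, (l : ℂ) * ramanujanSum q ((l : ℤ) - h)) = 0 := by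
    nth_rewrite 2 [hrefl]
    rw [← Finset.sum_add_distrib]
    have step : ∀ l ∈ Finset.range q,
        (l : ℂ) * ramanujanSum q ((l : ℤ) - h)
          + ((q : ℂ) - 1 - (l : ℂ)) * ramanujanSum q ((l : ℤ) - h)
        = ((q : ℂ) - 1) * ramanujanSum q ((l : ℤ) - h) := fun l _ => by ring
    rw [Finset.sum_congr rfl step, ← Finset.mul_sum, S0_zero hq h, mul_zero]
  rw [← two_mul] at hsum
  exact (mul_eq_zero.mp hsum).resolve_left two_ne_zero

theorem stmt11 (q : ℕ) (hq : 3 ≤ q) (hodd : Odd q) (n m : ℤ) :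
    ∑ l ∈ Finset.range q, ((n : ℂ) - (l : ℂ)) ^ 2 * ramanujanSum q ((l : ℤ) - ((q : ℤ) - 1) / 2)
      = ∑ l ∈ Finset.range q, ((m : ℂ) - (l : ℂ)) ^ 2 * ramanujanSum q ((l : ℤ) - ((q : ℤ) - 1) / 2) := by
  set h : ℤ := ((q : ℤ) - 1) / 2 with hh
  have expand : ∀ N : ℂ,
      ∑ l ∈ Finset.range q, (N - (l : ℂ)) ^ 2 * ramanujanSum q ((l : ℤ) - h)
      = N ^ 2 * ∑ l ∈ Finset.range q, ramanujanSum q ((l : ℤ) - h)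
        - 2 * N * ∑ l ∈ Finset.range q, (l : ℂ) * ramanujanSum q ((l : ℤ) - h)
        + ∑ l ∈ Finset.range q, (l : ℂ) ^ 2 * ramanujanSum q ((l : ℤ) - h) := by
    intro N
    rw [Finset.mul_sum, Finset.mul_sum, ← Finset.sum_sub_distrib, ← Finset.sum_add_distrib]
    refine Finset.sum_congr rfl fun l _ => ?_
    ring
  rw [expand, expand, S0_zero hq h, S1_zero hq hodd]
  ring
end
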